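/- A pentagonal geometry PENT(2,r) is equivalent to a complete graph on r+3 vertices from which the edge set of a 2-regular spanning subgraph with no cycle of length 3 (a disjoint union of cycles each of length ≥ 4 or 5, none of size 3) has been deleted, with lines being the remaining edges. -/

import Mathlib

open scoped Classical

/-- A pentagonal geometry PENT(k,r). -/
structure PentGeom (V : Type) [Fintype V] [DecidableEq V] (k r : ℕ) : Type where
  lines : Finset (Finset V)
  size_pos : 2 ≤ k
  rep_pos : 1 ≤ r
  pairwise : ∀ x y : V, x ≠ y → (lines.filter (fun l => x ∈ l ∧ y ∈ l)).card ≤ 1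
  uniform : ∀ l ∈ lines, l.card = k
  regular : ∀ x : V, (lines.filter (fun l => x ∈ l)).card = r
  opp : ∀ x : V,
    (Finset.univ.filter (fun y => y ≠ x ∧ ∀ l ∈ lines, ¬(x ∈ l ∧ y ∈ l))) ∈ lines

variable {V : Type} [Fintype V] [DecidableEq V] {k r : ℕ}

/-- The opposite line of a point. -/
def PentGeom.oppLine (P : PentGeom V k r) (x : V) : Finset V :=
  Finset.univ.filter (fun y => y ≠ x ∧ ∀ l ∈ P.lines, ¬(x ∈ l ∧ y ∈ l))

/-- Two points are collinear if some line contains both. -/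
def PentGeom.Collinear (P : PentGeom V k r) (x y : V) : Prop :=
  x ≠ y ∧ ∃ l ∈ P.lines, x ∈ l ∧ y ∈ l

/-- An opposite line pair. -/
def PentGeom.OppPair (P : PentGeom V k r) (l m : Finset V) : Prop :=
  l ∈ P.lines ∧ m ∈ P.lines ∧ l ≠ m ∧
    (∀ x ∈ l, P.oppLine x = m) ∧ (∀ y ∈ m, P.oppLine y = l)

/-- Auxiliary: the graph of non-collinear pairs of a pentagonal geometry. -/
def PentGeom.oppGraph (P : PentGeom V k r) : SimpleGraph V where
  Adj x y := x ≠ y ∧ ∀ l ∈ P.lines, ¬(x ∈ l ∧ y ∈ l)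
  symm := by
    constructor
    rintro x y ⟨hne, h⟩
    exact ⟨hne.symm, fun l hl hm => h l hl ⟨hm.2, hm.1⟩⟩
  loopless := by constructor; rintro x ⟨hne, -⟩; exact hne rfl

lemma PentGeom.oppGraph_adj (P : PentGeom V k r) (x y : V) :
    P.oppGraph.Adj x y ↔ (x ≠ y ∧ ∀ l ∈ P.lines, ¬(x ∈ l ∧ y ∈ l)) := Iff.rfl

/-- A pentagonal geometry PENT(2,r) is equivalent to a complete graph on r+3
vertices from which the edge set of a 2-regular spanning subgraph with no 3-cycle has been
deleted, the lines being the remaining edges. -/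
theorem stmt6 (r : ℕ) (V : Type) [Fintype V] [DecidableEq V]
    (hV : Fintype.card V = r + 3) (hr : 1 ≤ r) :
    (∀ P : PentGeom V 2 r, ∃ H : SimpleGraph V,
      (∀ v : V, (Finset.univ.filter (fun w => H.Adj v w)).card = 2) ∧
      (∀ x y z : V, ¬(H.Adj x y ∧ H.Adj y z ∧ H.Adj x z)) ∧
      (∀ x y : V, x ≠ y → (({x, y} : Finset V) ∈ P.lines ↔ ¬ H.Adj x y))) ∧
    (∀ H : SimpleGraph V,
      (∀ v : V, (Finset.univ.filter (fun w => H.Adj v w)).card = 2) →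
      (∀ x y z : V, ¬(H.Adj x y ∧ H.Adj y z ∧ H.Adj x z)) →
      ∃ P : PentGeom V 2 r,
        ∀ x y : V, x ≠ y → (({x, y} : Finset V) ∈ P.lines ↔ ¬ H.Adj x y)) := by
  constructor
  · -- Forward direction: from a pentagonal geometry, build the 2-regular graph
    intro P
    refine ⟨P.oppGraph, ?_, ?_, ?_⟩
    · intro v
      have : (Finset.univ.filter (fun w => P.oppGraph.Adj v w)) = P.oppLine v := by
        apply Finset.ext
        intro w
        simp only [PentGeom.oppLine, PentGeom.oppGraph_adj, Finset.mem_filter,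
          Finset.mem_univ, true_and]
        constructor
        · rintro ⟨h1, h2⟩; exact ⟨h1.symm, h2⟩
        · rintro ⟨h1, h2⟩; exact ⟨h1.symm, h2⟩
      rw [this]
      exact P.uniform _ (P.opp v)
    · rintro x y z ⟨⟨hxy, hxyl⟩, ⟨hyz, hyzl⟩, ⟨hxz, hxzl⟩⟩
      have hyO : y ∈ P.oppLine x := by
        simp only [PentGeom.oppLine, Finset.mem_filter, Finset.mem_univ, true_and]
        exact ⟨hxy.symm, hxyl⟩
      have hzO : z ∈ P.oppLine x := by
        simp only [PentGeom.oppLine, Finset.mem_filter, Finset.mem_univ, true_and]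
        exact ⟨hxz.symm, hxzl⟩
      exact hyzl (P.oppLine x) (P.opp x) ⟨hyO, hzO⟩
    · intro x y hxy
      constructor
      · intro hl hadj
        exact hadj.2 _ hl ⟨Finset.mem_insert_self x {y}, by simp⟩
      · intro hadj
        change ¬(x ≠ y ∧ ∀ l ∈ P.lines, ¬(x ∈ l ∧ y ∈ l)) at hadj
        push_neg at hadj
        obtain ⟨l, hl, hxl, hyl⟩ := hadj hxy
        have hsub : ({x, y} : Finset V) ⊆ l := by
          intro a ha
          rcases Finset.mem_insert.mp ha with h | h
          · rwa [h]
          · rw [Finset.mem_singleton.mp h]; exact hyl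
        have : ({x, y} : Finset V) = l := by
          apply Finset.eq_of_subset_of_card_le hsub
          rw [P.uniform l hl, Finset.card_pair hxy]
        rw [this]; exact hl
  · -- Reverse direction: from the graph, build a pentagonal geometry
    intro H h2 htri
    set lines : Finset (Finset V) :=
      Finset.univ.filter (fun l : Finset V => ∃ x y : V, x ≠ y ∧ ¬ H.Adj x y ∧ l = {x, y})
      with hlines
    have hmem : ∀ a b : V, a ≠ b → (({a, b} : Finset V) ∈ lines ↔ ¬ H.Adj a b) := by
      intro a b hab
      rw [hlines, Finset.mem_filter]
      constructor
      · rintro ⟨-, x, y, hxy, hnadj, hpair⟩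
        have hax : a ∈ ({x, y} : Finset V) := by rw [← hpair]; simp
        have hbx : b ∈ ({x, y} : Finset V) := by rw [← hpair]; simp
        simp only [Finset.mem_insert, Finset.mem_singleton] at hax hbx
        rcases hax with rfl | rfl <;> rcases hbx with rfl | rfl
        · exact absurd rfl hab
        · exact hnadj
        · exact fun h => hnadj (H.adj_symm h)
        · exact absurd rfl hab
      · intro h
        exact ⟨Finset.mem_univ _, a, b, hab, h, rfl⟩
    have hcard2 : ∀ l ∈ lines, l.card = 2 := by
      intro l hl
      rw [hlines, Finset.mem_filter] at hl
      obtain ⟨-, x, y, hxy, -, rfl⟩ := hl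
      exact Finset.card_pair hxy
    have heq : ∀ (x y : V), x ≠ y → ∀ l ∈ lines, x ∈ l → y ∈ l → l = {x, y} := by
      intro x y hxy l hl hx hy
      have hsub : ({x, y} : Finset V) ⊆ l := by
        intro a ha
        rcases Finset.mem_insert.mp ha with h | h
        · rwa [h]
        · rw [Finset.mem_singleton.mp h]; exact hy
      exact (Finset.eq_of_subset_of_card_le hsub (by rw [hcard2 l hl, Finset.card_pair hxy])).symm
    have hnbr : ∀ x : V, H.neighborFinset x = Finset.univ.filter (fun w => H.Adj x w) := by
      intro x; ext w; simp [SimpleGraph.mem_neighborFinset]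
    refine ⟨⟨lines, le_refl 2, hr, ?_, hcard2, ?_, ?_⟩, ?_⟩
    · -- pairwise
      intro x y hxy
      apply Finset.card_le_one.mpr
      intro l hl m hm
      rw [Finset.mem_filter] at hl hm
      rw [heq x y hxy l hl.1 hl.2.1 hl.2.2, heq x y hxy m hm.1 hm.2.1 hm.2.2]
    · -- regular
      intro x
      have himg : lines.filter (fun l => x ∈ l)
          = (Finset.univ.filter (fun y => y ≠ x ∧ ¬ H.Adj x y)).image
              (fun y => ({x, y} : Finset V)) := by
        ext l
        simp only [Finset.mem_filter, Finset.mem_image, Finset.mem_univ, true_and]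
        constructor
        · rintro ⟨hl, hxl⟩
          have hl' := hl
          rw [hlines, Finset.mem_filter] at hl'
          obtain ⟨-, a, b, hab, hnadj, rfl⟩ := hl'
          simp only [Finset.mem_insert, Finset.mem_singleton] at hxl
          rcases hxl with rfl | rfl
          · exact ⟨b, ⟨hab.symm, hnadj⟩, rfl⟩
          · refine ⟨a, ⟨hab, fun h => hnadj (H.adj_symm h)⟩, ?_⟩
            rw [Finset.pair_comm]
        · rintro ⟨y, ⟨hy, hnadj⟩, rfl⟩
          exact ⟨(hmem x y (Ne.symm hy)).mpr hnadj, by simp⟩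
      rw [himg, Finset.card_image_of_injOn]
      · have hset : Finset.univ.filter (fun y => y ≠ x ∧ ¬ H.Adj x y)
            = Finset.univ \ insert x (H.neighborFinset x) := by
          ext y
          simp only [Finset.mem_filter, Finset.mem_univ, true_and, Finset.mem_sdiff,
            Finset.mem_insert, SimpleGraph.mem_neighborFinset]
          tauto
        rw [hset, Finset.card_sdiff_of_subset (Finset.subset_univ _), Finset.card_insert_of_notMem,
          Finset.card_univ, hV]
        · rw [hnbr, h2 x]; omega
        · simp [SimpleGraph.mem_neighborFinset]
      · intro a ha b hb hpq
        have hpq' : ({x, a} : Finset V) = {x, b} := hpq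
        have : a ∈ ({x, b} : Finset V) := by rw [← hpq']; simp
        simp only [Finset.mem_insert, Finset.mem_singleton] at this
        rcases this with rfl | rfl
        · exact absurd rfl (Finset.mem_filter.mp ha).2.1
        · rfl
    · -- opp
      intro x
      have hS : Finset.univ.filter (fun y => y ≠ x ∧ ∀ l ∈ lines, ¬(x ∈ l ∧ y ∈ l))
          = H.neighborFinset x := by
        ext y
        simp only [Finset.mem_filter, Finset.mem_univ, true_and,
          SimpleGraph.mem_neighborFinset]
        constructor
        · rintro ⟨hyx, hall⟩
          by_contra hnadj
          exact hall {x, y} ((hmem x y (Ne.symm hyx)).mpr hnadj) ⟨by simp, by simp⟩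
        · intro hadj
          refine ⟨fun h => H.irrefl (h ▸ hadj), fun l hl ⟨hxl, hyl⟩ => ?_⟩
          have hxy : x ≠ y := fun h => H.irrefl (h ▸ hadj)
          have := heq x y hxy l hl hxl hyl
          rw [this] at hl
          exact (hmem x y hxy).mp hl hadj
      have hcardN : (H.neighborFinset x).card = 2 := by rw [hnbr, h2 x]
      obtain ⟨a, b, hab, habs⟩ := Finset.card_eq_two.mp hcardN
      have haN : a ∈ H.neighborFinset x := by rw [habs]; simp
      have hbN : b ∈ H.neighborFinset x := by rw [habs]; simp
      have hax : H.Adj x a := (SimpleGraph.mem_neighborFinset H x a).mp haN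
      have hbx : H.Adj x b := (SimpleGraph.mem_neighborFinset H x b).mp hbN
      have hnab : ¬ H.Adj a b := fun h => htri x a b ⟨hax, h, hbx⟩
      rw [hS, habs]
      exact (hmem a b hab).mpr hnab
    · intro x y hxy
      exact hmem x y hxy
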